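/- Let 𝔽 ∈ {ℝ, ℂ}, let m, n, k be positive integers, let c₀ > 0, let A ∈ 𝔽^{m×n}, and let Δ : ℝ^m → 𝔽^n be a map satisfying dist(Δ(|Ax|), x) ≤ c₀·σ_k(x)₂ for all x ∈ 𝔽^n. Then for every η ∈ 𝔽^n with A·η = 0 and every index set T ⊆ {1,…,n} with |T| ≤ 2k, one has ‖η‖₂ ≤ c₀·‖η_{T^c}‖₂. -/

import Mathlib

open MeasureTheory ProbabilityTheory Real Finset

/-- The `ℓ_q` (quasi-)norm `(∑ i, ‖x i‖^q)^{1/q}` of a vector with entries in `𝕜 ∈ {ℝ, ℂ}`. -/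
noncomputable def lpNorm {ι : Type*} [Fintype ι] {𝕜 : Type*} [RCLike 𝕜] (q : ℝ) (x : ι → 𝕜) : ℝ :=
  (∑ i, ‖x i‖ ^ q) ^ (1 / q)

open Classical in
/-- The number of nonzero entries of a vector. -/
noncomputable def l0Norm {ι : Type*} [Fintype ι] {𝕜 : Type*} [RCLike 𝕜] (x : ι → 𝕜) : ℕ :=
  (Finset.univ.filter fun i => x i ≠ 0).card

/-- The phase distance `dist_q(x,y) = inf_{|c|=1} ‖x - c • y‖_q`. -/
noncomputable def phaseDist {ι : Type*} [Fintype ι] {𝕜 : Type*} [RCLike 𝕜] (q : ℝ)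
    (x y : ι → 𝕜) : ℝ :=
  sInf {d | ∃ c : 𝕜, ‖c‖ = 1 ∧ d = lpNorm q (fun i => x i - c * y i)}

/-- The best `k`-term approximation error `σ_k(x)_q = inf {‖x - z‖_q : ‖z‖₀ ≤ k}`. -/
noncomputable def sigmaK {ι : Type*} [Fintype ι] {𝕜 : Type*} [RCLike 𝕜] (k : ℕ) (q : ℝ)
    (x : ι → 𝕜) : ℝ :=
  sInf {d | ∃ z : ι → 𝕜, l0Norm z ≤ k ∧ d = lpNorm q (fun i => x i - z i)}

/-- The entrywise modulus `|Ax|` of the matrix-vector product `Ax`. -/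
noncomputable def absMv {m n : ℕ} {𝕜 : Type*} [RCLike 𝕜] (A : Fin m → Fin n → 𝕜)
    (x : Fin n → 𝕜) : Fin m → ℝ :=
  fun i => ‖∑ j, A i j * x j‖

section Helpers
variable {ι : Type*} [Fintype ι] {𝕜 : Type*} [RCLike 𝕜]

lemma lpNorm_two_eq_norm (x : ι → 𝕜) :
    lpNorm 2 x = ‖(WithLp.equiv 2 (ι → 𝕜)).symm x‖ := by
  rw [EuclideanSpace.norm_eq, Real.sqrt_eq_rpow, _root_.lpNorm]
  norm_num

lemma lpNorm_nonneg (q : ℝ) (x : ι → 𝕜) : 0 ≤ lpNorm q x :=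
  Real.rpow_nonneg (Finset.sum_nonneg fun _ _ => Real.rpow_nonneg (norm_nonneg _) _) _

lemma lpNorm_congr (q : ℝ) {x y : ι → 𝕜} (h : ∀ i, ‖x i‖ = ‖y i‖) :
    lpNorm q x = lpNorm q y := by
  unfold _root_.lpNorm; congr 1; exact Finset.sum_congr rfl fun i _ => by rw [h]

lemma lpNorm_zero (q : ℝ) (hq : q ≠ 0) : lpNorm q (fun _ : ι => (0 : 𝕜)) = 0 := by
  unfold _root_.lpNorm
  simp only [norm_zero, Real.zero_rpow hq, Finset.sum_const, smul_zero]
  exact Real.zero_rpow (one_div_ne_zero hq)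

lemma phaseDist_bdd (x y : ι → 𝕜) :
    BddBelow {d | ∃ c : 𝕜, ‖c‖ = 1 ∧ d = lpNorm 2 (fun i => x i - c * y i)} :=
  ⟨0, fun _ ⟨_, _, hd⟩ => hd ▸ lpNorm_nonneg 2 _⟩

lemma phaseDist_le (x y : ι → 𝕜) {c : 𝕜} (hc : ‖c‖ = 1) :
    phaseDist 2 x y ≤ lpNorm 2 (fun i => x i - c * y i) :=
  csInf_le (phaseDist_bdd x y) ⟨c, hc, rfl⟩

lemma phaseDist_nonneg (x y : ι → 𝕜) : 0 ≤ phaseDist 2 x y :=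
  le_csInf ⟨lpNorm 2 (fun i => x i - 1 * y i), 1, norm_one, rfl⟩
    fun _ ⟨_, _, hd⟩ => hd ▸ lpNorm_nonneg 2 _

lemma phaseDist_exists (x y : ι → 𝕜) :
    ∃ c : 𝕜, ‖c‖ = 1 ∧ phaseDist 2 x y = lpNorm 2 (fun i => x i - c * y i) := by
  have hcont : Continuous fun c : 𝕜 => lpNorm 2 (fun i => x i - c * y i) := by
    have : ∀ c : 𝕜, lpNorm 2 (fun i => x i - c * y i) =
        ‖(WithLp.equiv 2 (ι → 𝕜)).symm x - c • (WithLp.equiv 2 (ι → 𝕜)).symm y‖ := by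
      intro c; rw [lpNorm_two_eq_norm]; rfl
    simp_rw [this]
    exact (continuous_const.sub (continuous_id.smul continuous_const)).norm
  obtain ⟨c, hcmem, hmin⟩ := (isCompact_sphere (0:𝕜) 1).exists_isMinOn
    ⟨1, by simp⟩ hcont.continuousOn
  have hc : ‖c‖ = 1 := by simpa using hcmem
  refine ⟨c, hc, le_antisymm (phaseDist_le x y hc) ?_⟩
  refine le_csInf ⟨_, 1, norm_one, rfl⟩ fun d ⟨c', hc', hd⟩ => ?_
  exact hd ▸ hmin (by simpa using hc')

lemma phaseDist_comm (x y : ι → 𝕜) : phaseDist 2 x y = phaseDist 2 y x := by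
  have key : ∀ u v : ι → 𝕜, phaseDist 2 u v ≤ phaseDist 2 v u := by
    intro u v
    obtain ⟨c, hc, heq⟩ := phaseDist_exists v u
    have hcinv : ‖c⁻¹‖ = 1 := by rw [norm_inv, hc]; norm_num
    have hc0 : c ≠ 0 := by intro h; rw [h] at hc; simp at hc
    rw [heq]
    refine (phaseDist_le u v hcinv).trans (le_of_eq (lpNorm_congr 2 fun i => ?_))
    have : u i - c⁻¹ * v i = -c⁻¹ * (v i - c * u i) := by field_simp; ring
    rw [this, norm_mul, norm_neg, hcinv, one_mul]
  exact le_antisymm (key x y) (key y x)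

lemma phaseDist_triangle (x z y : ι → 𝕜) :
    phaseDist 2 x y ≤ phaseDist 2 x z + phaseDist 2 z y := by
  obtain ⟨c₁, hc₁, h₁⟩ := phaseDist_exists x z
  obtain ⟨c₂, hc₂, h₂⟩ := phaseDist_exists z y
  have hc : ‖c₁ * c₂‖ = 1 := by rw [norm_mul, hc₁, hc₂, one_mul]
  refine (phaseDist_le x y hc).trans ?_
  rw [h₁, h₂, lpNorm_two_eq_norm, lpNorm_two_eq_norm, lpNorm_two_eq_norm]
  set e := (WithLp.equiv 2 (ι → 𝕜)).symm
  have h1 : e (fun i => x i - c₁ * c₂ * y i) =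
      (e x - c₁ • e z) + c₁ • (e z - c₂ • e y) := by
    ext i
    show x i - c₁ * c₂ * y i = (x i - c₁ * z i) + c₁ * (z i - c₂ * y i)
    ring
  have h2 : e (fun i => x i - c₁ * z i) = e x - c₁ • e z := rfl
  have h3 : e (fun i => z i - c₂ * y i) = e z - c₂ • e y := rfl
  rw [h1, h2, h3]
  calc ‖(e x - c₁ • e z) + c₁ • (e z - c₂ • e y)‖
      ≤ ‖e x - c₁ • e z‖ + ‖c₁ • (e z - c₂ • e y)‖ := norm_add_le _ _
    _ = ‖e x - c₁ • e z‖ + ‖e z - c₂ • e y‖ := by rw [norm_smul, hc₁, one_mul]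

lemma sigmaK_bdd (k : ℕ) (x : ι → 𝕜) :
    BddBelow {d | ∃ z : ι → 𝕜, l0Norm z ≤ k ∧ d = lpNorm 2 (fun i => x i - z i)} :=
  ⟨0, fun _ ⟨_, _, hd⟩ => hd ▸ lpNorm_nonneg 2 _⟩

lemma sigmaK_le (k : ℕ) (x z : ι → 𝕜) (hz : l0Norm z ≤ k) :
    sigmaK k 2 x ≤ lpNorm 2 (fun i => x i - z i) :=
  csInf_le (sigmaK_bdd k x) ⟨z, hz, rfl⟩

lemma sigmaK_eq_zero (k : ℕ) (x : ι → 𝕜) (hx : l0Norm x ≤ k) : sigmaK k 2 x = 0 := by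
  refine le_antisymm ?_ (le_csInf ⟨_, x, hx, rfl⟩ fun _ ⟨_, _, hd⟩ => hd ▸ lpNorm_nonneg 2 _)
  have := sigmaK_le k x x hx
  simpa [lpNorm_zero 2 (by norm_num : (2:ℝ) ≠ 0)] using this

end Helpers

/-- `A` satisfies the phaseless bi-Lipschitz condition on `X` with constants `L, U`:
`L·dist(x,y) ≤ ‖|Ax| - |Ay|‖₂ ≤ U·dist(x,y)` for all `x, y ∈ X`. -/
def PhaselessBiLip {m n : ℕ} {𝕜 : Type*} [RCLike 𝕜] (A : Fin m → Fin n → 𝕜)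
    (X : Set (Fin n → 𝕜)) (L U : ℝ) : Prop :=
  ∀ x ∈ X, ∀ y ∈ X,
    L * phaseDist 2 x y ≤ lpNorm 2 (fun i => absMv A x i - absMv A y i) ∧
    lpNorm 2 (fun i => absMv A x i - absMv A y i) ≤ U * phaseDist 2 x y

/-- null-space property in the proof of Proposition `thm:bad_22`: if a decoder
`Δ` achieves `dist(Δ(|Ax|), x) ≤ c₀·σ_k(x)₂` for all `x`, then every `η` in the null space of `A`
and every index set `T` with `|T| ≤ 2k` satisfy `‖η‖₂ ≤ c₀·‖η_{T^c}‖₂`. -/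
theorem stmt12 {𝕜 : Type*} [RCLike 𝕜] (m n k : ℕ) (hm : 0 < m) (hn : 0 < n) (hk : 0 < k)
    (c₀ : ℝ) (hc₀ : 0 < c₀) (A : Fin m → Fin n → 𝕜) (Δ : (Fin m → ℝ) → (Fin n → 𝕜))
    (hΔ : ∀ x : Fin n → 𝕜, phaseDist 2 (Δ (absMv A x)) x ≤ c₀ * sigmaK k 2 x)
    (η : Fin n → 𝕜) (hη : ∀ i, ∑ j, A i j * η j = 0)
    (T : Finset (Fin n)) (hT : T.card ≤ 2 * k) :
    lpNorm 2 η ≤ c₀ * lpNorm 2 (fun i => if i ∈ T then 0 else η i) := by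
  classical
  -- split T into T₀ with |T₀| ≤ k and |T \ T₀| ≤ k
  obtain ⟨T₀, hT₀sub, hT₀card⟩ := Finset.exists_subset_card_eq (s := T) (n := min T.card k) (min_le_left _ _)
  have hT₀k : T₀.card ≤ k := hT₀card ▸ min_le_right _ _
  have hTdk : (T \ T₀).card ≤ k := by
    rw [Finset.card_sdiff_of_subset hT₀sub, hT₀card]
    omega
  set x₁ : Fin n → 𝕜 := fun i => if i ∈ T₀ then η i else 0 with hx₁
  set x₂ : Fin n → 𝕜 := fun i => if i ∈ T₀ then 0 else -η i with hx₂
  -- |A x₁| = |A x₂|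
  have hA : absMv A x₁ = absMv A x₂ := by
    funext i
    unfold absMv
    congr 1
    rw [← sub_eq_zero, ← Finset.sum_sub_distrib, ← hη i]
    refine Finset.sum_congr rfl fun j _ => ?_
    simp only [hx₁, hx₂, ← mul_sub]
    congr 1
    by_cases h : j ∈ T₀ <;> simp [h]
  set z := Δ (absMv A x₁) with hz
  -- phaseDist x₁ x₂ = ‖η‖
  have hd12 : phaseDist 2 x₁ x₂ = lpNorm 2 η := by
    have hset : {d | ∃ c : 𝕜, ‖c‖ = 1 ∧ d = lpNorm 2 (fun i => x₁ i - c * x₂ i)}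
        = {lpNorm 2 η} := by
      ext d
      simp only [Set.mem_setOf_eq, Set.mem_singleton_iff]
      constructor
      · rintro ⟨c, hc, rfl⟩
        refine lpNorm_congr 2 fun i => ?_
        by_cases h : i ∈ T₀
        · simp [hx₁, hx₂, h]
        · simp only [hx₁, hx₂, if_neg h]
          rw [show (0:𝕜) - c * -η i = c * η i by ring, norm_mul, hc, one_mul]
      · rintro rfl
        refine ⟨1, norm_one, (lpNorm_congr 2 fun i => ?_).symm⟩
        by_cases h : i ∈ T₀
        · simp [hx₁, hx₂, h]
        · simp only [hx₁, hx₂, if_neg h]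
          rw [show (0:𝕜) - 1 * -η i = η i by ring]
    rw [phaseDist, hset, csInf_singleton]
  -- x₁ is k-sparse
  have hs1 : sigmaK k 2 x₁ = 0 := by
    refine sigmaK_eq_zero k x₁ (le_trans ?_ hT₀k)
    refine le_trans (Finset.card_le_card ?_) le_rfl
    intro i hi
    simp only [Finset.mem_filter, Finset.mem_univ, true_and] at hi
    by_contra h
    exact hi (by simp [hx₁, h])
  -- σ_k(x₂) ≤ ‖η_{T^c}‖
  have hs2 : sigmaK k 2 x₂ ≤ lpNorm 2 (fun i => if i ∈ T then 0 else η i) := by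
    set w : Fin n → 𝕜 := fun i => if i ∈ T \ T₀ then -η i else 0 with hw
    have hwcard : l0Norm w ≤ k := by
      refine le_trans (Finset.card_le_card ?_) hTdk
      intro i hi
      simp only [l0Norm, Finset.mem_filter, Finset.mem_univ, true_and] at hi
      by_contra h
      exact hi (by simp only [hw]; exact if_neg h)
    refine (sigmaK_le k x₂ w hwcard).trans (le_of_eq (lpNorm_congr 2 fun i => ?_))
    by_cases h₀ : i ∈ T₀
    · have hT' : i ∈ T := hT₀sub h₀
      simp [hx₂, hw, h₀, hT']
    · by_cases hT' : i ∈ T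
      · simp [hx₂, hw, h₀, hT', Finset.mem_sdiff]
      · have : i ∉ T \ T₀ := fun h => hT' (Finset.mem_sdiff.mp h).1
        simp [hx₂, hw, h₀, hT', this]
  -- decoder bounds
  have h1 : phaseDist 2 z x₁ = 0 := by
    have := hΔ x₁
    rw [hs1, mul_zero] at this
    exact le_antisymm this (phaseDist_nonneg _ _)
  have h2 : phaseDist 2 z x₂ ≤ c₀ * sigmaK k 2 x₂ := by rw [hz, hA]; exact hΔ x₂
  calc lpNorm 2 η = phaseDist 2 x₁ x₂ := hd12.symm
    _ ≤ phaseDist 2 x₁ z + phaseDist 2 z x₂ := phaseDist_triangle _ _ _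
    _ = phaseDist 2 z x₁ + phaseDist 2 z x₂ := by rw [phaseDist_comm]
    _ ≤ 0 + c₀ * sigmaK k 2 x₂ := add_le_add (le_of_eq h1) h2
    _ = c₀ * sigmaK k 2 x₂ := zero_add _
    _ ≤ c₀ * lpNorm 2 (fun i => if i ∈ T then 0 else η i) :=
        mul_le_mul_of_nonneg_left hs2 hc₀.le
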